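/- (Theorem 1(ii)) For the SGPO and GRPO dynamics initialized at pS_0 = qS_0 = pG_0 = qG_0 = 1/2, one has pS_k > pG_k for every k ≥ 1. -/

import Mathlib

noncomputable def f11 (p : ℝ) : ℝ :=
  Real.log p + p * (1 - p) - Real.log (1 - p + p * Real.exp (p * (1 - p)))

noncomputable def f21 (p q : ℝ) : ℝ :=
  Real.log p + p * (1 - p) * q - Real.log (1 - p + p * Real.exp (p * (1 - p) * q))

noncomputable def f12 (p q : ℝ) : ℝ :=
  Real.log q + p ^ 2 * q * (1 - q) - Real.log (1 - q + q * Real.exp (p ^ 2 * q * (1 - q)))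

noncomputable def f22 (p q : ℝ) : ℝ :=
  Real.log q + p * q * (1 - q) - Real.log (1 - q + q * Real.exp (p * q * (1 - q)))

noncomputable def Gfun (p a : ℝ) : ℝ := p * Real.exp a / (1 - p + p * Real.exp a)

lemma den_pos {p : ℝ} (a : ℝ) (hp0 : 0 < p) (hp1 : p < 1) :
    0 < 1 - p + p * Real.exp a := by
  have := Real.exp_pos a; nlinarith

lemma Gfun_pos {p a : ℝ} (hp0 : 0 < p) (hp1 : p < 1) : 0 < Gfun p a := by
  apply div_pos
  · have := Real.exp_pos a; positivity
  · exact den_pos a hp0 hp1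

lemma Gfun_lt_one {p a : ℝ} (hp0 : 0 < p) (hp1 : p < 1) : Gfun p a < 1 := by
  rw [Gfun, div_lt_one (den_pos a hp0 hp1)]; linarith

lemma Gfun_strict_a {p a b : ℝ} (hp0 : 0 < p) (hp1 : p < 1) (hab : a < b) :
    Gfun p a < Gfun p b := by
  have ha := Real.exp_pos a
  have hb := Real.exp_pos b
  have h : Real.exp a < Real.exp b := Real.exp_lt_exp.2 hab
  rw [Gfun, Gfun, div_lt_div_iff₀ (den_pos a hp0 hp1) (den_pos b hp0 hp1)]
  nlinarith [mul_lt_mul_of_pos_left h (mul_pos hp0 (sub_pos.2 hp1))]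

lemma exp_f11 {p : ℝ} (hp0 : 0 < p) (hp1 : p < 1) :
    Real.exp (f11 p) = Gfun p (p * (1 - p)) := by
  rw [f11, Gfun, Real.exp_sub, Real.exp_add, Real.exp_log hp0,
    Real.exp_log (den_pos _ hp0 hp1)]

lemma exp_f21 {p q : ℝ} (hp0 : 0 < p) (hp1 : p < 1) :
    Real.exp (f21 p q) = Gfun p (p * (1 - p) * q) := by
  rw [f21, Gfun, Real.exp_sub, Real.exp_add, Real.exp_log hp0,
    Real.exp_log (den_pos _ hp0 hp1)]

lemma exp_f22 {p q : ℝ} (hq0 : 0 < q) (hq1 : q < 1) :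
    Real.exp (f22 p q) = Gfun q (p * q * (1 - q)) := by
  rw [f22, Gfun, Real.exp_sub, Real.exp_add, Real.exp_log hq0,
    Real.exp_log (den_pos _ hq0 hq1)]

lemma F_eq {p : ℝ} (hp0 : 0 < p) (hp1 : p < 1) :
    Gfun p (p * (1 - p)) =
      1 / (1 + Real.exp (Real.log (1 - p) - Real.log p - p + p ^ 2)) := by
  have h1p : (0:ℝ) < 1 - p := by linarith
  have hE : Real.exp (Real.log (1 - p) - Real.log p - p + p ^ 2) =
      (1 - p) / (p * Real.exp (p * (1 - p))) := by
    rw [show Real.log (1 - p) - Real.log p - p + p ^ 2 =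
        Real.log (1 - p) - (Real.log p + p * (1 - p)) by ring,
      Real.exp_sub, Real.exp_add, Real.exp_log h1p, Real.exp_log hp0]
  rw [Gfun, hE]
  have he := Real.exp_pos (p * (1 - p))
  rw [div_eq_div_iff (den_pos (p * (1 - p)) hp0 hp1).ne' (by positivity)]
  field_simp
  ring

lemma phi_anti : StrictAntiOn
    (fun p : ℝ => Real.log (1 - p) - Real.log p - p + p ^ 2) (Set.Ioo 0 1) := by
  have hderiv : ∀ x ∈ Set.Ioo (0:ℝ) 1,
      HasDerivAt (fun p : ℝ => Real.log (1 - p) - Real.log p - p + p ^ 2)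
        ((1 - x)⁻¹ * (-1) - x⁻¹ - 1 + 2 * x) x := by
    intro x hx
    have hx0 : (0:ℝ) < x := hx.1
    have hx1 : (0:ℝ) < 1 - x := by linarith [hx.2]
    have h1 : HasDerivAt (fun x : ℝ => 1 - x) (-1) x := by
      simpa using (hasDerivAt_id x).const_sub 1
    have h2 : HasDerivAt (fun x : ℝ => Real.log (1 - x)) ((1 - x)⁻¹ * (-1)) x :=
      (Real.hasDerivAt_log (ne_of_gt hx1)).comp x h1
    have h3 : HasDerivAt Real.log x⁻¹ x := Real.hasDerivAt_log (ne_of_gt hx0)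
    have h4 : HasDerivAt (fun x : ℝ => x ^ 2) (2 * x) x := by
      simpa using hasDerivAt_pow 2 x
    have := ((h2.sub h3).sub (hasDerivAt_id x)).add h4
    exact this
  apply strictAntiOn_of_deriv_neg (convex_Ioo 0 1)
  · exact fun x hx => (hderiv x hx).continuousAt.continuousWithinAt
  · intro x hx
    rw [interior_Ioo] at hx
    rw [(hderiv x hx).deriv]
    have hx0 : (0:ℝ) < x := hx.1
    have hx1 : (0:ℝ) < 1 - x := by linarith [hx.2]
    have hi1 : (1:ℝ) < (1 - x)⁻¹ := one_lt_inv₀ hx1 |>.2 (by linarith)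
    have hi2 : (0:ℝ) < x⁻¹ := by positivity
    nlinarith

lemma F_strictMono {p q : ℝ} (hp : p ∈ Set.Ioo (0:ℝ) 1) (hq : q ∈ Set.Ioo (0:ℝ) 1)
    (hlt : p < q) : Gfun p (p * (1 - p)) < Gfun q (q * (1 - q)) := by
  rw [F_eq hp.1 hp.2, F_eq hq.1 hq.2]
  have hphi := phi_anti hp hq hlt
  have hE : Real.exp (Real.log (1 - q) - Real.log q - q + q ^ 2) <
      Real.exp (Real.log (1 - p) - Real.log p - p + p ^ 2) :=
    Real.exp_lt_exp.2 hphi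
  have h1 : (0:ℝ) < 1 + Real.exp (Real.log (1 - q) - Real.log q - q + q ^ 2) := by
    have := Real.exp_pos (Real.log (1 - q) - Real.log q - q + q ^ 2); linarith
  exact one_div_lt_one_div_of_lt h1 (by linarith)

theorem sgpo_beats_grpo_first_coordinate (pS qS pG qG : ℕ → ℝ)
    (hpS0 : pS 0 = 1 / 2) (hqS0 : qS 0 = 1 / 2)
    (hpG0 : pG 0 = 1 / 2) (hqG0 : qG 0 = 1 / 2)
    (hpS : ∀ k, pS (k + 1) = Real.exp (f11 (pS k)))
    (hqS : ∀ k, qS (k + 1) = Real.exp (f12 (pS k) (qS k)))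
    (hpG : ∀ k, pG (k + 1) = Real.exp (f21 (pG k) (qG k)))
    (hqG : ∀ k, qG (k + 1) = Real.exp (f22 (pG k) (qG k))) :
    ∀ k : ℕ, 1 ≤ k → pS k > pG k := by
  have key : ∀ k, (pS k ∈ Set.Ioo (0:ℝ) 1) ∧ (pG k ∈ Set.Ioo (0:ℝ) 1) ∧
      (qG k ∈ Set.Ioo (0:ℝ) 1) ∧ pG k ≤ pS k ∧ (1 ≤ k → pG k < pS k) := by
    intro k
    induction k with
    | zero =>
      refine ⟨?_, ?_, ?_, ?_, ?_⟩ <;>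
        simp [hpS0, hpG0, hqG0, Set.mem_Ioo] <;> norm_num
    | succ n ih =>
      obtain ⟨hS, hG, hQ, hle, _⟩ := ih
      have hstep : pG (n + 1) < pS (n + 1) := by
        rw [hpS n, hpG n, exp_f11 hS.1 hS.2, exp_f21 hG.1 hG.2]
        have h1 : Gfun (pG n) (pG n * (1 - pG n) * qG n) <
            Gfun (pG n) (pG n * (1 - pG n)) := by
          apply Gfun_strict_a hG.1 hG.2
          nlinarith [mul_lt_mul_of_pos_left hQ.2 (mul_pos hG.1 (sub_pos.2 hG.2))]
        have h2 : Gfun (pG n) (pG n * (1 - pG n)) ≤ Gfun (pS n) (pS n * (1 - pS n)) := by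
          rcases eq_or_lt_of_le hle with h | h
          · rw [h]
          · exact le_of_lt (F_strictMono hG hS h)
        linarith
      refine ⟨?_, ?_, ?_, le_of_lt hstep, fun _ => hstep⟩
      · rw [hpS n, exp_f11 hS.1 hS.2]
        exact ⟨Gfun_pos hS.1 hS.2, Gfun_lt_one hS.1 hS.2⟩
      · rw [hpG n, exp_f21 hG.1 hG.2]
        exact ⟨Gfun_pos hG.1 hG.2, Gfun_lt_one hG.1 hG.2⟩
      · rw [hqG n, exp_f22 hQ.1 hQ.2]
        exact ⟨Gfun_pos hQ.1 hQ.2, Gfun_lt_one hQ.1 hQ.2⟩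
  intro k hk
  exact (key k).2.2.2.2 hk
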